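/- The numeral system b′ defined by b′₀ = b₁, b′₁ = b₀, and b′ₙ = bₙ for n ≥ 2 possesses no closed λ-term for Successor, no closed λ-term for Predecessor, and no closed λ-term for Zero Test. -/

import Mathlib

/-- Untyped λ-terms in de Bruijn notation. -/
inductive Lam : Type
  | var : ℕ → Lam
  | app : Lam → Lam → Lam
  | lam : Lam → Lam
  deriving DecidableEq

namespace Lam

/-- Shift by one the free variables with index ≥ `d`. -/
def lift (d : ℕ) : Lam → Lam
  | var n => if n < d then var n else var (n + 1)
  | app M N => app (lift d M) (lift d N)
  | lam M => lam (lift (d + 1) M)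

/-- Capture-avoiding substitution of `N` for the free variable of index `n`. -/
def subst : Lam → ℕ → Lam → Lam
  | var m, n, N => if m = n then N else if n < m then var (m - 1) else var m
  | app M₁ M₂, n, N => app (subst M₁ n N) (subst M₂ n N)
  | lam M, n, N => lam (subst M (n + 1) (lift 0 N))

/-- One-step β-reduction (contraction of a β-redex anywhere in the term). -/
inductive Step : Lam → Lam → Prop
  | beta (M N : Lam) : Step (app (lam M) N) (subst M 0 N)
  | appL {M M' : Lam} (N : Lam) : Step M M' → Step (app M N) (app M' N)
  | appR (M : Lam) {N N' : Lam} : Step N N' → Step (app M N) (app M N')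
  | lam {M M' : Lam} : Step M M' → Step (Lam.lam M) (Lam.lam M')

/-- β-equivalence: the equivalence relation generated by one-step β-reduction. -/
def BetaEq : Lam → Lam → Prop := Relation.EqvGen Step

/-- The variable of index `n` occurs free in the term. -/
def HasFree : Lam → ℕ → Prop
  | var m, n => m = n
  | app M N, n => HasFree M n ∨ HasFree N n
  | lam M, n => HasFree M (n + 1)

/-- A term is closed if it has no free variables. -/
def Closed (M : Lam) : Prop := ∀ n, ¬ HasFree M n

/-- A term is β-normal: it contains no β-redex. -/
def IsBetaNormal : Lam → Prop
  | app (lam _) _ => False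
  | app M N => IsBetaNormal M ∧ IsBetaNormal N
  | lam M => IsBetaNormal M
  | var _ => True

/-- A term is βη-normal: it contains no β-redex and no η-redex
`λx.(M x)` with `x` not free in `M`. -/
def IsBetaEtaNormal : Lam → Prop
  | app (lam _) _ => False
  | app M N => IsBetaEtaNormal M ∧ IsBetaEtaNormal N
  | lam (app M (var 0)) => HasFree M 0 ∧ IsBetaEtaNormal (app M (var 0))
  | lam M => IsBetaEtaNormal M
  | var _ => True

/-- `I = λx.x`. -/
def I : Lam := lam (var 0)

/-- `T = λxλy.x`. -/
def T : Lam := lam (lam (var 1))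

/-- `F = λxλy.y`. -/
def F : Lam := lam (lam (var 0))

/-- The pair `<M,N> = λx.(x M N)` (the binder shifts the free variables of `M,N`). -/
def pair (M N : Lam) : Lam := lam (app (app (var 0) (lift 0 M)) (lift 0 N))

end Lam

/-- The numeral system `a` : `aₙ = λx₁…λxₙ.I` (so `a₀ = I`). -/
def Lam.sysA : ℕ → Lam
  | 0 => Lam.I
  | n + 1 => Lam.lam (Lam.sysA n)

/-- The numeral system `b` : `b₀ = <T, I>` and `bₙ = <F, a_{n-1}>` for `n ≥ 1`. -/
def Lam.sysB : ℕ → Lam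
  | 0 => Lam.pair Lam.T Lam.I
  | n + 1 => Lam.pair Lam.F (Lam.sysA n)

/-- The numeral system `b′` : `b′₀ = b₁`, `b′₁ = b₀` and `b′ₙ = bₙ` for `n ≥ 2`. -/
def Lam.sysB' : ℕ → Lam
  | 0 => Lam.sysB 1
  | 1 => Lam.sysB 0
  | n + 2 => Lam.sysB (n + 2)

namespace Lam

/-! ### Basic lift/subst algebra -/

theorem lift_lift (M : Lam) : ∀ c d, c ≤ d →
    lift c (lift d M) = lift (d + 1) (lift c M) := by
  induction M with
  | var n =>
    intro c d h
    simp only [lift]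
    split_ifs <;> simp only [lift] <;> split_ifs <;>
      first | rfl | omega | (simp_all; omega)
  | app M N ihM ihN => intro c d h; simp [lift, ihM c d h, ihN c d h]
  | lam M ih => intro c d h; simp [lift, ih (c+1) (d+1) (by omega)]

theorem lift_subst (M : Lam) : ∀ c n (N : Lam), c ≤ n →
    lift c (subst M n N) = subst (lift c M) (n + 1) (lift c N) := by
  induction M with
  | var m =>
    intro c n N h
    simp only [subst, lift]
    split_ifs <;> simp only [subst, lift] <;> split_ifs <;>
      first | rfl | omega | (simp_all; omega)
  | app M N ihM ihN => intro c n N' h; simp [subst, lift, ihM c n N' h, ihN c n N' h]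
  | lam M ih =>
    intro c n N h
    simp only [subst, lift]
    rw [ih (c+1) (n+1) (lift 0 N) (by omega), lift_lift N 0 c (by omega)]

theorem lift_subst_ge (M : Lam) : ∀ c n (N : Lam), n ≤ c →
    lift c (subst M n N) = subst (lift (c + 1) M) n (lift c N) := by
  induction M with
  | var m =>
    intro c n N h
    simp only [subst, lift]
    split_ifs <;> simp only [subst, lift] <;> split_ifs <;>
      first | rfl | omega | (simp_all; omega)
  | app M N ihM ihN => intro c n N' h; simp [subst, lift, ihM c n N' h, ihN c n N' h]
  | lam M ih =>
    intro c n N h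
    simp only [subst, lift]
    rw [ih (c+1) (n+1) (lift 0 N) (by omega), lift_lift N 0 c (by omega)]

theorem subst_lift_cancel (M : Lam) : ∀ n (N : Lam), subst (lift n M) n N = M := by
  induction M with
  | var m =>
    intro n N
    simp only [subst, lift]
    split_ifs <;> simp only [subst] <;> split_ifs <;>
      first | rfl | omega | (simp_all; omega)
  | app M N ihM ihN => intro n N'; simp [lift, subst, ihM, ihN]
  | lam M ih => intro n N; simp [lift, subst, ih]

theorem subst_subst (M : Lam) : ∀ i n (N P : Lam), i ≤ n →
    subst (subst M i N) n P = subst (subst M (n + 1) (lift i P)) i (subst N n P) := by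
  induction M with
  | var m =>
    intro i n N P h
    by_cases h2 : m = n + 1
    · subst h2
      have e1 : subst (var (n+1)) i N = var n := by
        simp only [subst]
        split_ifs <;> first | omega | (simp only [var.injEq]; omega)
      have e2 : subst (var n) n P = P := by simp [subst]
      have e3 : subst (var (n+1)) (n+1) (lift i P) = lift i P := by simp [subst]
      rw [e1, e2, e3, subst_lift_cancel]
    · simp only [subst]
      split_ifs <;> simp only [subst] <;> split_ifs <;>
        first | rfl | omega | (simp_all; omega)
  | app A B ihA ihB => intro i n N P h; simp [subst, ihA _ _ _ _ h, ihB _ _ _ _ h]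
  | lam A ih =>
    intro i n N P h
    simp only [subst]
    rw [ih (i+1) (n+1) (lift 0 N) (lift 0 P) (by omega),
      lift_subst N 0 n P (by omega), lift_lift P 0 i (by omega)]

end Lam
namespace Lam

/-! ### Free-variable bounds and closed terms -/

/-- All free variables of `M` are `< d`. -/
def FVB (M : Lam) (d : ℕ) : Prop := ∀ k, HasFree M k → k < d

theorem fvb_app {M N : Lam} {d : ℕ} (h : FVB (app M N) d) : FVB M d ∧ FVB N d :=
  ⟨fun k hk => h k (Or.inl hk), fun k hk => h k (Or.inr hk)⟩

theorem fvb_lam {M : Lam} {d : ℕ} (h : FVB (lam M) d) : FVB M (d + 1) := by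
  intro k hk
  cases k with
  | zero => omega
  | succ k => have := h k hk; omega

theorem fvb_mono {M : Lam} {d e : ℕ} (h : FVB M d) (hde : d ≤ e) : FVB M e :=
  fun k hk => lt_of_lt_of_le (h k hk) hde

theorem lift_of_fvb {M : Lam} : ∀ {d e : ℕ}, FVB M d → d ≤ e → lift e M = M := by
  induction M with
  | var m =>
    intro d e h hde
    have := h m rfl
    simp only [lift, if_pos (show m < e by omega)]
  | app M N ihM ihN =>
    intro d e h hde
    obtain ⟨h1, h2⟩ := fvb_app h
    simp [lift, ihM h1 hde, ihN h2 hde]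
  | lam M ih =>
    intro d e h hde
    simp [lift, ih (fvb_lam h) (by omega : d + 1 ≤ e + 1)]

theorem subst_of_fvb {M : Lam} : ∀ {d e : ℕ} {N : Lam}, FVB M d → d ≤ e → subst M e N = M := by
  induction M with
  | var m =>
    intro d e N h hde
    have := h m rfl
    simp only [subst, if_neg (show ¬ m = e by omega), if_neg (show ¬ e < m by omega)]
  | app M N ihM ihN =>
    intro d e N' h hde
    obtain ⟨h1, h2⟩ := fvb_app h
    simp [subst, ihM h1 hde, ihN h2 hde]
  | lam M ih =>
    intro d e N h hde
    simp [subst, ih (fvb_lam h) (by omega : d + 1 ≤ e + 1)]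

theorem closed_fvb {M : Lam} (h : Closed M) : FVB M 0 := fun k hk => absurd hk (h k)

theorem lift_closed {M : Lam} (h : Closed M) (d : ℕ) : lift d M = M :=
  lift_of_fvb (closed_fvb h) (Nat.zero_le d)

theorem subst_closed {M : Lam} (h : Closed M) (n : ℕ) (N : Lam) : subst M n N = M :=
  subst_of_fvb (closed_fvb h) (Nat.zero_le n)

theorem sysA_fvb (n : ℕ) : FVB (sysA n) 0 := by
  induction n with
  | zero =>
    intro k hk
    simp only [sysA, I, HasFree] at hk
    omega
  | succ n ih =>
    intro k hk
    simp only [sysA, HasFree] at hk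
    have := ih _ hk; omega

theorem lift_sysA (d n : ℕ) : lift d (sysA n) = sysA n :=
  lift_of_fvb (sysA_fvb n) (Nat.zero_le d)

theorem subst_sysA (n e : ℕ) (N : Lam) : subst (sysA n) e N = sysA n :=
  subst_of_fvb (sysA_fvb n) (Nat.zero_le e)

/-! ### Reduction basics -/

/-- Many-step β-reduction. -/
def Red : Lam → Lam → Prop := Relation.ReflTransGen Step

theorem Red.refl {M : Lam} : Red M M := Relation.ReflTransGen.refl

theorem Red.trans {M N P : Lam} (h1 : Red M N) (h2 : Red N P) : Red M P :=
  Relation.ReflTransGen.trans h1 h2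

theorem Red.of_step {M N : Lam} (h : Step M N) : Red M N :=
  Relation.ReflTransGen.single h

theorem Red.appL {M M' : Lam} (N : Lam) (h : Red M M') : Red (app M N) (app M' N) := by
  induction h with
  | refl => exact Red.refl
  | tail _ h2 ih => exact ih.trans (Red.of_step (Step.appL N h2))

theorem Red.appR (M : Lam) {N N' : Lam} (h : Red N N') : Red (app M N) (app M N') := by
  induction h with
  | refl => exact Red.refl
  | tail _ h2 ih => exact ih.trans (Red.of_step (Step.appR M h2))

theorem Red.lam {M M' : Lam} (h : Red M M') : Red (lam M) (lam M') := by
  induction h with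
  | refl => exact Red.refl
  | tail _ h2 ih => exact ih.trans (Red.of_step (Step.lam h2))

theorem Step.lift {M M' : Lam} (h : Step M M') : ∀ d, Step (lift d M) (lift d M') := by
  induction h with
  | beta A B => intro d; rw [lift_subst_ge A d 0 B (by omega)]; exact Step.beta _ _
  | appL N _ ih => intro d; exact Step.appL _ (ih d)
  | appR M _ ih => intro d; exact Step.appR _ (ih d)
  | lam _ ih => intro d; exact Step.lam (ih (d+1))

theorem Step.substL {M M' : Lam} (h : Step M M') : ∀ n (N : Lam),
    Step (subst M n N) (subst M' n N) := by
  induction h with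
  | beta A B =>
    intro n N
    rw [subst_subst A 0 n B N (by omega)]
    exact Step.beta _ _
  | appL N _ ih => intro n N'; exact Step.appL _ (ih n N')
  | appR M _ ih => intro n N'; exact Step.appR _ (ih n N')
  | lam _ ih => intro n N; exact Step.lam (ih (n+1) (Lam.lift 0 N))

theorem Red.substL {M M' : Lam} (h : Red M M') (n : ℕ) (N : Lam) :
    Red (subst M n N) (subst M' n N) := by
  induction h with
  | refl => exact Red.refl
  | tail _ h2 ih => exact ih.trans (Red.of_step (h2.substL n N))

theorem Step.substR : ∀ (M : Lam) {N N' : Lam}, Step N N' → ∀ n,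
    Red (subst M n N) (subst M n N') := by
  intro M
  induction M with
  | var m =>
    intro N N' h n
    by_cases hm : m = n
    · simp only [subst, if_pos hm]; exact Red.of_step h
    · simp only [subst, if_neg hm]; exact Red.refl
  | app A B ihA ihB => intro N N' h n; exact (Red.appL _ (ihA h n)).trans (Red.appR _ (ihB h n))
  | lam A ih => intro N N' h n; exact Red.lam (ih (h.lift 0) (n+1))

end Lam
namespace Lam

/-! ### Parallel reduction and confluence -/

inductive Par : Lam → Lam → Prop
  | var (n : ℕ) : Par (var n) (var n)
  | app {M M' N N' : Lam} : Par M M' → Par N N' → Par (app M N) (app M' N')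
  | lam {M M' : Lam} : Par M M' → Par (lam M) (lam M')
  | beta {M M' N N' : Lam} : Par M M' → Par N N' →
      Par (app (lam M) N) (subst M' 0 N')

theorem Par.refl : ∀ (M : Lam), Par M M := by
  intro M
  induction M with
  | var n => exact Par.var n
  | app M N ihM ihN => exact Par.app ihM ihN
  | lam M ih => exact Par.lam ih

theorem Par.of_step {M N : Lam} (h : Step M N) : Par M N := by
  induction h with
  | beta A B => exact Par.beta (Par.refl A) (Par.refl B)
  | appL N _ ih => exact Par.app ih (Par.refl N)
  | appR M _ ih => exact Par.app (Par.refl M) ih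
  | lam _ ih => exact Par.lam ih

theorem Par.red {M N : Lam} (h : Par M N) : Red M N := by
  induction h with
  | var n => exact Red.refl
  | app _ _ ih1 ih2 => exact (Red.appL _ ih1).trans (Red.appR _ ih2)
  | lam _ ih => exact Red.lam ih
  | @beta M M' N N' _ _ ih1 ih2 =>
    exact ((Red.appL _ (Red.lam ih1)).trans (Red.appR _ ih2)).trans
      (Red.of_step (Step.beta M' N'))

theorem Par.lift {M N : Lam} (h : Par M N) : ∀ d, Par (Lam.lift d M) (Lam.lift d N) := by
  induction h with
  | var n => intro d; simp only [Lam.lift]; split_ifs <;> apply Par.refl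
  | app _ _ ih1 ih2 => intro d; exact Par.app (ih1 d) (ih2 d)
  | lam _ ih => intro d; exact Par.lam (ih (d+1))
  | @beta M M' N N' _ _ ih1 ih2 =>
    intro d
    rw [lift_subst_ge M' d 0 N' (by omega)]
    exact Par.beta (ih1 (d+1)) (ih2 d)

theorem Par.subst {M M' : Lam} (h : Par M M') : ∀ {N N' : Lam} (_ : Par N N') (i : ℕ),
    Par (Lam.subst M i N) (Lam.subst M' i N') := by
  induction h with
  | var n =>
    intro N N' hN i
    simp only [Lam.subst]
    split_ifs <;> first | exact hN | apply Par.refl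
  | app _ _ ih1 ih2 => intro N N' hN i; exact Par.app (ih1 hN i) (ih2 hN i)
  | lam _ ih => intro N N' hN i; exact Par.lam (ih (hN.lift 0) (i+1))
  | @beta A A' B B' _ _ ih1 ih2 =>
    intro N N' hN i
    have := Par.beta (ih1 (hN.lift 0) (i+1)) (ih2 hN i)
    rwa [← subst_subst A' 0 i B' N' (by omega)] at this

/-- Takahashi's complete development. -/
def cd : Lam → Lam
  | var n => var n
  | lam M => lam (cd M)
  | app (lam M) N => subst (cd M) 0 (cd N)
  | app (var m) N => app (var m) (cd N)
  | app (app A B) N => app (cd (app A B)) (cd N)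

theorem Par.lam_inv {A X : Lam} (h : Par (Lam.lam A) X) :
    ∃ A', X = Lam.lam A' ∧ Par A A' := by
  cases h with
  | lam h => exact ⟨_, rfl, h⟩

theorem Par.cd {M N : Lam} (h : Par M N) : Par N (Lam.cd M) := by
  induction h with
  | var n => exact Par.var n
  | lam _ ih => exact Par.lam ih
  | @app M₁ N₁ M₂ N₂ h1 h2 ih1 ih2 =>
    cases M₁ with
    | var m =>
      cases h1 with
      | var => exact Par.app (Par.var m) ih2
    | lam A =>
      obtain ⟨A₁, rfl, hA⟩ := h1.lam_inv
      simp only [Lam.cd]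
      have h3 : Par (Lam.lam A₁) (Lam.lam (Lam.cd A)) := by
        rw [show Lam.lam (Lam.cd A) = Lam.cd (Lam.lam A) from rfl]
        exact ih1
      obtain ⟨A₂, hEq, hA₂⟩ := h3.lam_inv
      cases hEq
      exact Par.beta hA₂ ih2
    | app A B => exact Par.app ih1 ih2
  | @beta A A' B B' h1 h2 ih1 ih2 =>
    simp only [Lam.cd]
    exact Par.subst ih1 ih2 0

theorem par_diamond {M N₁ N₂ : Lam} (h1 : Par M N₁) (h2 : Par M N₂) :
    ∃ Q, Par N₁ Q ∧ Par N₂ Q := ⟨cd M, h1.cd, h2.cd⟩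

/-- Multi-step parallel reduction. -/
def ParRed : Lam → Lam → Prop := Relation.ReflTransGen Par

theorem parred_of_red {M N : Lam} (h : Red M N) : ParRed M N := by
  induction h with
  | refl => exact Relation.ReflTransGen.refl
  | tail _ h2 ih => exact ih.tail (Par.of_step h2)

theorem red_of_parred {M N : Lam} (h : ParRed M N) : Red M N := by
  induction h with
  | refl => exact Red.refl
  | tail _ h2 ih => exact ih.trans h2.red

theorem par_strip {M N₁ N₂ : Lam} (h1 : Par M N₁) (h2 : ParRed M N₂) :
    ∃ Q, ParRed N₁ Q ∧ Par N₂ Q := by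
  induction h2 generalizing N₁ with
  | refl => exact ⟨N₁, Relation.ReflTransGen.refl, h1⟩
  | @tail X Y _ hXY ih =>
    obtain ⟨Q, hQ1, hQ2⟩ := ih h1
    obtain ⟨R, hR1, hR2⟩ := par_diamond hQ2 hXY
    exact ⟨R, hQ1.tail hR1, hR2⟩

theorem parred_confluent {M N₁ N₂ : Lam} (h1 : ParRed M N₁) (h2 : ParRed M N₂) :
    ∃ Q, ParRed N₁ Q ∧ ParRed N₂ Q := by
  induction h1 with
  | refl => exact ⟨N₂, h2, Relation.ReflTransGen.refl⟩
  | @tail X Y _ hXY ih =>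
    obtain ⟨Q, hQ1, hQ2⟩ := ih
    obtain ⟨R, hR1, hR2⟩ := par_strip hXY hQ1
    exact ⟨R, hR1, hQ2.tail hR2⟩

theorem red_confluent {M N₁ N₂ : Lam} (h1 : Red M N₁) (h2 : Red M N₂) :
    ∃ Q, Red N₁ Q ∧ Red N₂ Q := by
  obtain ⟨Q, hQ1, hQ2⟩ := parred_confluent (parred_of_red h1) (parred_of_red h2)
  exact ⟨Q, red_of_parred hQ1, red_of_parred hQ2⟩

theorem betaEq_join {M N : Lam} (h : BetaEq M N) : ∃ Q, Red M Q ∧ Red N Q := by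
  induction h with
  | rel X Y h => exact ⟨Y, Red.of_step h, Red.refl⟩
  | refl X => exact ⟨X, Red.refl, Red.refl⟩
  | symm X Y _ ih => obtain ⟨Q, h1, h2⟩ := ih; exact ⟨Q, h2, h1⟩
  | trans X Y Z _ _ ih1 ih2 =>
    obtain ⟨Q1, hXQ, hYQ⟩ := ih1
    obtain ⟨Q2, hYQ2, hZQ⟩ := ih2
    obtain ⟨R, hR1, hR2⟩ := red_confluent hYQ hYQ2
    exact ⟨R, hXQ.trans hR1, hZQ.trans hR2⟩

/-- Terms with no reduct. -/
def NoStep (M : Lam) : Prop := ∀ N, ¬ Step M N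

theorem red_of_noStep {M N : Lam} (h : NoStep M) (hr : Red M N) : N = M := by
  induction hr with
  | refl => rfl
  | tail h1 h2 ih => subst ih; exact absurd h2 (h _)

theorem betaEq_red_of_noStep {M N : Lam} (h : BetaEq M N) (hN : NoStep N) : Red M N := by
  obtain ⟨Q, h1, h2⟩ := betaEq_join h
  rwa [red_of_noStep hN h2] at h1

/-! ### BetaEq congruences -/

theorem BetaEq.of_step {M N : Lam} (h : Step M N) : BetaEq M N := Relation.EqvGen.rel _ _ h

theorem BetaEq.refl (M : Lam) : BetaEq M M := Relation.EqvGen.refl M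

theorem BetaEq.symm {M N : Lam} (h : BetaEq M N) : BetaEq N M := Relation.EqvGen.symm _ _ h

theorem BetaEq.trans {M N P : Lam} (h1 : BetaEq M N) (h2 : BetaEq N P) : BetaEq M P :=
  Relation.EqvGen.trans _ _ _ h1 h2

theorem Red.betaEq {M N : Lam} (h : Red M N) : BetaEq M N := by
  induction h with
  | refl => exact BetaEq.refl _
  | tail _ h2 ih => exact ih.trans (BetaEq.of_step h2)

theorem BetaEq.appL {M M' : Lam} (N : Lam) (h : BetaEq M M') :
    BetaEq (app M N) (app M' N) := by
  induction h with
  | rel X Y h => exact BetaEq.of_step (Step.appL N h)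
  | refl X => exact BetaEq.refl _
  | symm X Y _ ih => exact ih.symm
  | trans X Y Z _ _ ih1 ih2 => exact ih1.trans ih2

end Lam
namespace Lam

/-! ### Head reduction -/

def isLam : Lam → Bool
  | lam _ => true
  | _ => false

/-- The head step (if any). -/
def headStep : Lam → Option Lam
  | var _ => none
  | lam M => (headStep M).map lam
  | app (lam M) N => some (subst M 0 N)
  | app (var _) _ => none
  | app (app A B) N => (headStep (app A B)).map (fun M' => app M' N)

theorem headStep_app_of_not_lam {M N : Lam} (h : isLam M = false) :
    headStep (app M N) = (headStep M).map (fun M' => app M' N) := by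
  cases M with
  | var m => rfl
  | lam A => simp [isLam] at h
  | app A B => rfl

theorem headStep_step {M N : Lam} (h : headStep M = some N) : Step M N := by
  induction M generalizing N with
  | var m => simp [headStep] at h
  | lam A ih =>
    simp only [headStep, Option.map_eq_some_iff] at h
    obtain ⟨A', hA, rfl⟩ := h
    exact Step.lam (ih hA)
  | app A B ihA ihB =>
    cases A with
    | var m => simp [headStep] at h
    | lam C =>
      simp only [headStep, Option.some.injEq] at h
      subst h
      exact Step.beta C B
    | app C D =>
      simp only [headStep, Option.map_eq_some_iff] at h
      obtain ⟨A', hA, rfl⟩ := h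
      exact Step.appL _ (ihA hA)

theorem headStep_isLam {M N : Lam} (h : headStep M = some N) (hM : isLam M = true) :
    isLam N = true := by
  cases M with
  | var m => simp [isLam] at hM
  | app A B => simp [isLam] at hM
  | lam A =>
    simp only [headStep, Option.map_eq_some_iff] at h
    obtain ⟨A', _, rfl⟩ := h
    rfl

theorem headStep_none_isLam {M : Lam} (h : headStep M = none) (hM : isLam M = false) :
    ∀ N, headStep (app M N) = none := by
  intro N
  rw [headStep_app_of_not_lam hM, h]
  rfl

theorem headStep_subst {M M' : Lam} : ∀ (n : ℕ) (A : Lam), headStep M = some M' →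
    headStep (subst M n A) = some (subst M' n A) := by
  induction M generalizing M' with
  | var m => intro n A h; simp [headStep] at h
  | lam B ih =>
    intro n A h
    simp only [headStep, Option.map_eq_some_iff] at h
    obtain ⟨B', hB, rfl⟩ := h
    simp only [Lam.subst, headStep, ih _ _ hB, Option.map_some]
  | app B C ihB ihC =>
    intro n A h
    cases B with
    | var m => simp [headStep] at h
    | lam D =>
      simp only [headStep, Option.some.injEq] at h
      subst h
      simp only [Lam.subst, headStep, Option.some.injEq]
      rw [subst_subst D 0 n C A (by omega)]
    | app D E =>
      simp only [headStep, Option.map_eq_some_iff] at h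
      obtain ⟨B', hB, rfl⟩ := h
      have hB' := ihB n A hB
      have : isLam (subst (app D E) n A) = false := rfl
      rw [show subst (app (app D E) C) n A =
        app (subst (app D E) n A) (subst C n A) from rfl,
        headStep_app_of_not_lam this, hB']
      rfl

theorem headStep_subst_none {M : Lam} (n : ℕ) (A : Lam)
    (h : headStep (subst M n A) = none) : headStep M = none := by
  cases hM : headStep M with
  | none => rfl
  | some M' => rw [headStep_subst n A hM] at h; simp at h

/-- Head reduction (many steps). -/
def HRed : Lam → Lam → Prop := Relation.ReflTransGen (fun X Y => headStep X = some Y)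

theorem HRed.red {M N : Lam} (h : HRed M N) : Red M N := by
  induction h with
  | refl => exact Red.refl
  | tail _ h2 ih => exact ih.trans (Red.of_step (headStep_step h2))

theorem HRed.lam {M N : Lam} (h : HRed M N) : HRed (lam M) (lam N) := by
  induction h with
  | refl => exact Relation.ReflTransGen.refl
  | tail _ h2 ih =>
    exact ih.tail (by simp only [headStep, h2, Option.map_some])

theorem hred_isLam {M N : Lam} (h : HRed M N) (hM : isLam M = true) : isLam N = true := by
  induction h with
  | refl => exact hM
  | tail _ h2 ih => exact headStep_isLam h2 ih

theorem HRed.appL : ∀ {M N : Lam}, HRed M N → isLam N = false → ∀ P : Lam,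
    HRed (app M P) (app N P) := by
  intro M N h
  induction h with
  | refl => intro _ _; exact Relation.ReflTransGen.refl
  | @tail X Y hMX h2 ih =>
    intro hN P
    have hX : isLam X = false := by
      cases hXl : isLam X with
      | false => rfl
      | true => rw [headStep_isLam h2 hXl] at hN; cases hN
    refine (ih hX P).tail ?_
    rw [headStep_app_of_not_lam hX, h2]
    rfl

/-! ### Weak head reduction and standardization (Kashima-style) -/

inductive WhStep : Lam → Lam → Prop
  | beta (A B : Lam) : WhStep (app (lam A) B) (subst A 0 B)
  | app {M M' : Lam} (N : Lam) : WhStep M M' → WhStep (app M N) (app M' N)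

theorem WhStep.headStep {M N : Lam} (h : WhStep M N) : Lam.headStep M = some N := by
  induction h with
  | beta A B => rfl
  | @app M M' N h ih =>
    have hM : isLam M = false := by cases h <;> rfl
    rw [headStep_app_of_not_lam hM, ih]
    rfl

def Whr : Lam → Lam → Prop := Relation.ReflTransGen WhStep

theorem Whr.hred {M N : Lam} (h : Whr M N) : HRed M N := by
  induction h with
  | refl => exact Relation.ReflTransGen.refl
  | tail _ h2 ih => exact ih.tail h2.headStep

theorem WhStep.substL {M M' : Lam} (h : WhStep M M') (n : ℕ) (N : Lam) :
    WhStep (subst M n N) (subst M' n N) := by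
  induction h with
  | beta A B =>
    rw [show subst (Lam.app (Lam.lam A) B) n N =
      Lam.app (Lam.lam (subst A (n+1) (lift 0 N))) (subst B n N) from rfl,
      subst_subst A 0 n B N (by omega)]
    exact WhStep.beta _ _
  | @app M M' P h ih => exact WhStep.app _ ih

theorem WhStep.lift {M M' : Lam} (h : WhStep M M') (d : ℕ) :
    WhStep (Lam.lift d M) (Lam.lift d M') := by
  induction h with
  | beta A B =>
    rw [show Lam.lift d (Lam.app (Lam.lam A) B) =
      Lam.app (Lam.lam (Lam.lift (d+1) A)) (Lam.lift d B) from rfl,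
      lift_subst_ge A d 0 B (by omega)]
    exact WhStep.beta _ _
  | @app M M' P h ih => exact WhStep.app _ ih

theorem Whr.substL {M M' : Lam} (h : Whr M M') (n : ℕ) (N : Lam) :
    Whr (subst M n N) (subst M' n N) := by
  induction h with
  | refl => exact Relation.ReflTransGen.refl
  | tail _ h2 ih => exact ih.tail (h2.substL n N)

theorem Whr.lift {M M' : Lam} (h : Whr M M') (d : ℕ) :
    Whr (Lam.lift d M) (Lam.lift d M') := by
  induction h with
  | refl => exact Relation.ReflTransGen.refl
  | tail _ h2 ih => exact ih.tail (h2.lift d)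

theorem Whr.appL {M M' : Lam} (h : Whr M M') (N : Lam) : Whr (app M N) (app M' N) := by
  induction h with
  | refl => exact Relation.ReflTransGen.refl
  | tail _ h2 ih => exact ih.tail (WhStep.app _ h2)

/-- Standard reduction (Kashima). -/
inductive Hst : Lam → Lam → Prop
  | var {M : Lam} (i : ℕ) : Whr M (var i) → Hst M (var i)
  | app {M A B A' B' : Lam} : Whr M (app A B) → Hst A A' → Hst B B' →
      Hst M (app A' B')
  | lam {M A A' : Lam} : Whr M (lam A) → Hst A A' → Hst M (lam A')

theorem Hst.refl : ∀ M : Lam, Hst M M := by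
  intro M
  induction M with
  | var n => exact Hst.var n Relation.ReflTransGen.refl
  | app A B ihA ihB => exact Hst.app Relation.ReflTransGen.refl ihA ihB
  | lam A ih => exact Hst.lam Relation.ReflTransGen.refl ih

theorem Hst.whr_trans {M N P : Lam} (h1 : Whr M N) (h2 : Hst N P) : Hst M P := by
  cases h2 with
  | var i h => exact Hst.var i (h1.trans h)
  | app h hA hB => exact Hst.app (h1.trans h) hA hB
  | lam h hA => exact Hst.lam (h1.trans h) hA

theorem Hst.lift {M N : Lam} (h : Hst M N) : ∀ d, Hst (Lam.lift d M) (Lam.lift d N) := by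
  induction h with
  | var i h =>
    intro d
    have hw := h.lift d
    simp only [Lam.lift] at hw ⊢
    split_ifs at hw ⊢ <;> exact Hst.var _ hw
  | @app M A B A' B' h hA hB ihA ihB =>
    intro d
    exact Hst.app (h.lift d) (ihA d) (ihB d)
  | @lam M A A' h hA ihA =>
    intro d
    exact Hst.lam (h.lift d) (ihA (d+1))

theorem Hst.subst {M N : Lam} (h : Hst M N) : ∀ (n : ℕ) {B B' : Lam}, Hst B B' →
    Hst (Lam.subst M n B) (Lam.subst N n B') := by
  induction h with
  | @var M i h =>
    intro n B B' hB
    have hw : Whr (Lam.subst M n B) (Lam.subst (Lam.var i) n B) := h.substL n B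
    by_cases hin : i = n
    · subst hin
      rw [show Lam.subst (Lam.var i) i B = B by simp [Lam.subst]] at hw
      rw [show Lam.subst (Lam.var i) i B' = B' by simp [Lam.subst]]
      exact Hst.whr_trans hw hB
    · have he : Lam.subst (Lam.var i) n B' = Lam.subst (Lam.var i) n B := by
        simp only [Lam.subst, if_neg hin]
      rw [show (Lam.subst M n B).Hst (Lam.subst (Lam.var i) n B') =
        (Lam.subst M n B).Hst (Lam.subst (Lam.var i) n B) from by rw [he]]
      rw [show Lam.subst (Lam.var i) n B =
        if n < i then Lam.var (i-1) else Lam.var i by simp [Lam.subst, hin]] at hw ⊢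
      split_ifs at hw ⊢ <;> exact Hst.var _ hw
  | @app M A B A' B' h hA hB ihA ihB =>
    intro n C C' hC
    exact Hst.app (h.substL n C) (ihA n hC) (ihB n hC)
  | @lam M A A' h hA ihA =>
    intro n C C' hC
    have hw : Whr (Lam.subst M n C) (Lam.lam (Lam.subst A (n+1) (Lam.lift 0 C))) := h.substL n C
    exact Hst.lam hw (ihA (n+1) (hC.lift 0))

theorem Hst.step {M N P : Lam} (h : Hst M N) (hs : Step N P) : Hst M P := by
  induction h generalizing P with
  | var i h => cases hs
  | @app M A B A' B' h hA hB ihA ihB =>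
    cases hs with
    | beta C D =>
      -- A' = lam C, P = subst C 0 D, D = B'
      cases hA with
      | lam hw hC =>
        refine Hst.whr_trans ?_ (Hst.subst hC 0 hB)
        exact (h.trans ((hw.appL B).tail (WhStep.beta _ _)))
    | appL _ hs' => exact Hst.app h (ihA hs') hB
    | appR _ hs' => exact Hst.app h hA (ihB hs')
  | @lam M A A' h hA ihA =>
    cases hs with
    | lam hs' => exact Hst.lam h (ihA hs')

theorem red_hst {M N : Lam} (h : Red M N) : Hst M N := by
  induction h with
  | refl => exact Hst.refl M
  | tail _ h2 ih => exact ih.step h2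

/-- From a standard reduction to a head normal form, extract head normalization. -/
theorem hst_hnf : ∀ {M N : Lam}, Hst M N → headStep N = none →
    ∃ H, HRed M H ∧ headStep H = none ∧ isLam H = isLam N := by
  intro M N h
  induction h with
  | var i h => exact fun _ => ⟨var i, h.hred, rfl, rfl⟩
  | @app M A B A' B' h hA hB ihA ihB =>
    intro hN
    have hA'lam : isLam A' = false := by
      cases A' with
      | lam C => simp [headStep] at hN
      | var m => rfl
      | app C D => rfl
    have hA'none : headStep A' = none := by
      cases A' with
      | lam C => simp [headStep] at hN
      | var m => rfl
      | app C D =>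
        rw [headStep_app_of_not_lam hA'lam] at hN
        cases hAS : headStep (app C D) with
        | none => rfl
        | some X => rw [hAS] at hN; simp at hN
    obtain ⟨H, hH1, hH2, hH3⟩ := ihA hA'none
    rw [hA'lam] at hH3
    refine ⟨app H B, ?_, headStep_none_isLam hH2 hH3 B, rfl⟩
    exact (h.hred.trans (hH1.appL hH3 B))
  | @lam M A A' h hA ihA =>
    intro hN
    have hA'none : headStep A' = none := by
      simp only [headStep] at hN
      cases hAS : headStep A' with
      | none => rfl
      | some X => rw [hAS] at hN; simp at hN
    obtain ⟨H, hH1, hH2, _⟩ := ihA hA'none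
    refine ⟨lam H, h.hred.trans hH1.lam, ?_, rfl⟩
    simp only [headStep, hH2, Option.map_none]

/-- Back-substitution for head normalization. -/
theorem hred_back : ∀ {X H : Lam}, HRed X H → headStep H = none →
    ∀ (M A : Lam) (n : ℕ), X = subst M n A →
    ∃ H', HRed M H' ∧ headStep H' = none := by
  intro X H h
  induction h using Relation.ReflTransGen.head_induction_on with
  | refl =>
    intro hH M A n hMA
    subst hMA
    exact ⟨M, Relation.ReflTransGen.refl, headStep_subst_none n A hH⟩
  | @head X Y hXY hYH ih =>
    intro hH M A n hMA
    subst hMA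
    cases hM : headStep M with
    | none => exact ⟨M, Relation.ReflTransGen.refl, hM⟩
    | some M₁ =>
      have : Y = subst M₁ n A := by
        have h2 := headStep_subst n A hM
        rw [hXY] at h2
        exact Option.some_inj.mp h2
      obtain ⟨H', h1, h2⟩ := ih hH M₁ A n this
      exact ⟨H', Relation.ReflTransGen.head hM h1, h2⟩

end Lam
namespace Lam

/-! ### Head normal forms: structure -/

def lamIter : ℕ → Lam → Lam
  | 0, M => M
  | k + 1, M => lam (lamIter k M)

def spineApp (A : Lam) (l : List Lam) : Lam := l.foldl app A

@[simp] theorem spineApp_nil (A : Lam) : spineApp A [] = A := rfl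

@[simp] theorem spineApp_cons (A : Lam) (P : Lam) (l : List Lam) :
    spineApp A (P :: l) = spineApp (app A P) l := rfl

theorem spineApp_append (A : Lam) (l : List Lam) (P : Lam) :
    spineApp A (l ++ [P]) = app (spineApp A l) P := by
  simp [spineApp]

theorem spineApp_not_lam (i : ℕ) (l : List Lam) (C : Lam) :
    spineApp (var i) l ≠ lam C := by
  induction l using List.reverseRecOn with
  | nil => simp [spineApp]
  | append_singleton l P ih => rw [spineApp_append]; simp

theorem lamIter_add (a b : ℕ) (M : Lam) : lamIter a (lamIter b M) = lamIter (a + b) M := by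
  induction a with
  | zero => simp [lamIter]
  | succ a ih =>
    simp only [lamIter, ih]
    rw [show a + 1 + b = (a + b) + 1 by omega]
    rfl

theorem sysA_eq (n : ℕ) : sysA n = lamIter (n + 1) (var 0) := by
  induction n with
  | zero => rfl
  | succ n ih => simp [sysA, lamIter, ih]

theorem sysA_ne_var (n m : ℕ) : sysA n ≠ var m := by
  cases n <;> simp [sysA, I]

theorem sysA_injective {m n : ℕ} (h : sysA m = sysA n) : m = n := by
  induction m generalizing n with
  | zero =>
    cases n with
    | zero => rfl
    | succ n =>
      exfalso
      simp only [sysA, I, lam.injEq] at h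
      exact sysA_ne_var n 0 h.symm
  | succ m ih =>
    cases n with
    | zero =>
      exfalso
      simp only [sysA, I, lam.injEq] at h
      exact sysA_ne_var m 0 h
    | succ n => simp only [sysA, lam.injEq] at h; rw [ih h]

/-- decomposition of head normal forms -/
theorem hnf_decompose : ∀ (H : Lam), headStep H = none →
    ∃ k i l, H = lamIter k (spineApp (var i) l) := by
  intro H
  induction H with
  | var m => intro _; exact ⟨0, m, [], rfl⟩
  | lam A ih =>
    intro h
    simp only [headStep, Option.map_eq_none_iff] at h
    obtain ⟨k, i, l, rfl⟩ := ih h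
    exact ⟨k + 1, i, l, rfl⟩
  | app A B ihA ihB =>
    intro h
    have hAlam : isLam A = false := by
      cases A with
      | lam C => simp [headStep] at h
      | var m => rfl
      | app C D => rfl
    have hAnone : headStep A = none := by
      rw [headStep_app_of_not_lam hAlam] at h
      cases hAS : headStep A with
      | none => rfl
      | some X => rw [hAS] at h; simp at h
    obtain ⟨k, i, l, hEq⟩ := ihA hAnone
    cases k with
    | zero =>
      simp only [lamIter] at hEq
      subst hEq
      exact ⟨0, i, l ++ [B], by rw [spineApp_append]; rfl⟩
    | succ k =>
      exfalso
      simp only [lamIter] at hEq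
      subst hEq
      simp [isLam] at hAlam

/-- One-step reduction preserves the hnf shape. -/
theorem step_spine : ∀ (l : List Lam) (i : ℕ) (X : Lam),
    Step (spineApp (var i) l) X →
    ∃ l', X = spineApp (var i) l' ∧ l'.length = l.length := by
  intro l
  induction l using List.reverseRecOn with
  | nil => intro i X h; rw [spineApp_nil] at h; cases h
  | append_singleton l P ih =>
    intro i X h
    rw [spineApp_append] at h
    generalize hQ : spineApp (var i) l = Q at h
    cases h with
    | beta M N => exact absurd hQ (spineApp_not_lam i l M)
    | @appL M M' N h' =>
      subst hQ
      obtain ⟨l', rfl, hlen⟩ := ih i M' h'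
      exact ⟨l' ++ [P], by rw [spineApp_append], by simp [hlen]⟩
    | @appR M N N' h' =>
      subst hQ
      exact ⟨l ++ [N'], by rw [spineApp_append], by simp⟩

theorem step_hnf_shape : ∀ (k : ℕ) (l : List Lam) (i : ℕ) (X : Lam),
    Step (lamIter k (spineApp (var i) l)) X →
    ∃ l', X = lamIter k (spineApp (var i) l') ∧ l'.length = l.length := by
  intro k
  induction k with
  | zero => exact fun l i X h => step_spine l i X h
  | succ k ih =>
    intro l i X h
    cases h with
    | @lam M M' h' =>
      obtain ⟨l', rfl, hlen⟩ := ih l i M' h'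
      exact ⟨l', rfl, hlen⟩

theorem red_hnf_shape {k : ℕ} {l : List Lam} {i : ℕ} {X : Lam}
    (h : Red (lamIter k (spineApp (var i) l)) X) :
    ∃ l', X = lamIter k (spineApp (var i) l') ∧ l'.length = l.length := by
  induction h with
  | refl => exact ⟨l, rfl, rfl⟩
  | tail _ h2 ih =>
    obtain ⟨l', rfl, hlen⟩ := ih
    obtain ⟨l'', rfl, hlen'⟩ := step_hnf_shape _ _ _ _ h2
    exact ⟨l'', rfl, by omega⟩

/-- Inversion: when a hnf-shaped term equals `sysA m`. -/
theorem hnf_eq_sysA {k : ℕ} {l : List Lam} {i m : ℕ}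
    (h : lamIter k (spineApp (var i) l) = sysA m) : l = [] ∧ i = 0 ∧ k = m + 1 := by
  rw [sysA_eq] at h
  induction k generalizing m with
  | zero =>
    exfalso
    simp only [lamIter] at h
    exact spineApp_not_lam i l (lamIter m (var 0)) h
  | succ k ih =>
    cases m with
    | zero =>
      simp only [lamIter, lam.injEq] at h
      cases k with
      | zero =>
        simp only [lamIter] at h
        cases l using List.reverseRecOn with
        | nil =>
          simp only [spineApp_nil, var.injEq] at h
          exact ⟨rfl, h, rfl⟩
        | append_singleton l P => rw [spineApp_append] at h; cases h
      | succ k =>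
        exfalso
        simp only [lamIter] at h
        cases h
    | succ m =>
      have h' : lamIter k (spineApp (var i) l) = lamIter (m + 1) (var 0) := by
        simp only [lamIter, lam.injEq] at h
        exact h
      obtain ⟨h1, h2, h3⟩ := ih h'
      exact ⟨h1, h2, by omega⟩

theorem hnf_eq_T {k : ℕ} {l : List Lam} {i : ℕ}
    (h : lamIter k (spineApp (var i) l) = T) : l = [] ∧ i = 1 ∧ k = 2 := by
  cases k with
  | zero =>
    exfalso
    cases l using List.reverseRecOn with
    | nil => simp only [lamIter, spineApp_nil, T] at h; cases h
    | append_singleton l P =>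
      rw [spineApp_append] at h
      simp only [lamIter, T] at h
      cases h
  | succ k =>
    cases k with
    | zero =>
      exfalso
      simp only [lamIter, T, lam.injEq] at h
      exact spineApp_not_lam i l _ h
    | succ k =>
      cases k with
      | zero =>
        simp only [lamIter, T, lam.injEq] at h
        cases l using List.reverseRecOn with
        | nil =>
          simp only [spineApp_nil, var.injEq] at h
          exact ⟨rfl, h, rfl⟩
        | append_singleton l P => rw [spineApp_append] at h; cases h
      | succ k =>
        exfalso
        simp only [lamIter, T, lam.injEq] at h
        cases k <;> cases h

theorem hnf_eq_F {k : ℕ} {l : List Lam} {i : ℕ}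
    (h : lamIter k (spineApp (var i) l) = F) : l = [] ∧ i = 0 ∧ k = 2 := by
  have h' : lamIter k (spineApp (var i) l) = sysA 1 := by rw [h]; rfl
  obtain ⟨h1, h2, h3⟩ := hnf_eq_sysA h'
  exact ⟨h1, h2, h3⟩

/-! ### Normality of the relevant normal forms -/

theorem sysA_noStep (n : ℕ) : NoStep (sysA n) := by
  induction n with
  | zero =>
    intro N h
    cases h with
    | lam h' => cases h'
  | succ n ih =>
    intro N h
    cases h with
    | lam h' => exact ih _ h'

theorem T_noStep : NoStep T := by
  intro N h
  cases h with
  | lam h' => cases h' with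
    | lam h'' => cases h''

theorem F_noStep : NoStep F := sysA_noStep 1

/-! ### sysA computation rules -/

theorem sysA_app_step (n : ℕ) (P : Lam) : Step (app (sysA (n + 1)) P) (sysA n) := by
  have := Step.beta (sysA n) P
  rwa [subst_sysA] at this

theorem spineApp_red_head {A A' : Lam} (h : Red A A') (l : List Lam) :
    Red (spineApp A l) (spineApp A' l) := by
  induction l generalizing A A' with
  | nil => exact h
  | cons P l ih => exact ih (Red.appL P h)

theorem spineApp_sysA_red (l : List Lam) (n : ℕ) (hn : l.length ≤ n) :
    Red (spineApp (sysA n) l) (sysA (n - l.length)) := by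
  induction l generalizing n with
  | nil => simpa only [spineApp_nil, List.length_nil, Nat.sub_zero] using Red.refl
  | cons P l ih =>
    cases n with
    | zero => simp at hn
    | succ n =>
      simp only [spineApp_cons]
      refine (spineApp_red_head (Red.of_step (sysA_app_step n P)) l).trans ?_
      have := ih n (by simpa using hn)
      simpa using this

theorem lamIter_sysA (k m : ℕ) : lamIter k (sysA m) = sysA (k + m) := by
  induction k with
  | zero => simp [lamIter]
  | succ k ih =>
    simp only [lamIter, ih]
    rw [show k + 1 + m = (k + m) + 1 by omega]
    rfl

theorem red_lamIter {M N : Lam} (h : Red M N) (k : ℕ) : Red (lamIter k M) (lamIter k N) := by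
  induction k with
  | zero => exact h
  | succ k ih => exact Red.lam ih

/-! ### Substitution into hnf shapes -/

theorem subst_lamIter (k : ℕ) (M A : Lam) (n : ℕ) (hA : FVB A 0) :
    subst (lamIter k M) n A = lamIter k (subst M (n + k) A) := by
  induction k generalizing n with
  | zero => rfl
  | succ k ih =>
    simp only [lamIter, subst, lift_of_fvb hA (le_refl 0)]
    rw [ih (n + 1), show n + 1 + k = n + (k + 1) by omega]

theorem subst_spineApp (B : Lam) (l : List Lam) (n : ℕ) (A : Lam) :
    subst (spineApp B l) n A = spineApp (subst B n A) (l.map (fun P => subst P n A)) := by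
  induction l generalizing B with
  | nil => rfl
  | cons P l ih => simp only [spineApp_cons, List.map_cons, ih]; rfl

end Lam
namespace Lam

/-- The key impossibility: no closed term maps `a₀` to `T` and all `aₙ₊₁` to `F`. -/
theorem key (G : Lam) (hG : Closed G)
    (h0 : BetaEq (app G (sysA 0)) T)
    (hs : ∀ n, BetaEq (app G (sysA (n + 1))) F) : False := by
  have redT : Red (app G (sysA 0)) T := betaEq_red_of_noStep h0 T_noStep
  have redF : ∀ n, Red (app G (sysA (n + 1))) F :=
    fun n => betaEq_red_of_noStep (hs n) F_noStep
  have hsub : ∀ A : Lam, subst (app G (var 0)) 0 A = app G A := by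
    intro A
    simp [subst, subst_closed hG]
  -- head-normalize `G x`
  obtain ⟨H1, hH1, hH1none, -⟩ := hst_hnf (red_hst (redF 0)) (rfl : headStep F = none)
  rw [← hsub (sysA 1)] at hH1
  obtain ⟨H, hH, hHnone⟩ := hred_back hH1 hH1none (app G (var 0)) (sysA 1) 0 rfl
  obtain ⟨k, i, l, rfl⟩ := hnf_decompose H hHnone
  have hredA : ∀ A : Lam, Red (app G A) (subst (lamIter k (spineApp (var i) l)) 0 A) := by
    intro A
    have := (hH.red).substL 0 A
    rwa [hsub A] at this
  have hsubH : ∀ A : Lam, FVB A 0 → subst (lamIter k (spineApp (var i) l)) 0 A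
      = lamIter k (spineApp (subst (var i) k A) (l.map (fun P => subst P k A))) := by
    intro A hA
    rw [subst_lamIter k _ A 0 hA, subst_spineApp]
    norm_num
  by_cases hik : i = k
  · subst hik
    have hv : ∀ A : Lam, subst (var i) i A = A := by intro A; simp [subst]
    have main : ∀ n' : ℕ, l.length ≤ n' + 1 → i + (n' + 1 - l.length) = 1 := by
      intro n' hn
      set A := sysA (n' + 1) with hA
      have r1 : Red (app G A) (lamIter i (spineApp A (l.map (fun P => subst P i A)))) := by
        have := hredA A
        rwa [hsubH A (sysA_fvb _), hv] at this
      have r2 : Red (lamIter i (spineApp A (l.map (fun P => subst P i A))))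
          (sysA (i + (n' + 1 - l.length))) := by
        have hlen : (l.map (fun P => subst P i A)).length ≤ n' + 1 := by
          simpa using hn
        have := red_lamIter (spineApp_sysA_red (l.map (fun P => subst P i A)) (n' + 1) hlen) i
        rwa [lamIter_sysA, List.length_map] at this
      obtain ⟨Q, hQ1, hQ2⟩ := red_confluent (r1.trans r2) (redF n')
      have e1 : Q = sysA (i + (n' + 1 - l.length)) := red_of_noStep (sysA_noStep _) hQ1
      have e2 : Q = F := red_of_noStep F_noStep hQ2
      have : sysA (i + (n' + 1 - l.length)) = sysA 1 := by
        rw [← e1, e2]; rfl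
      exact sysA_injective this
    have m1 := main l.length (by omega)
    have m2 := main (l.length + 1) (by omega)
    omega
  · -- head variable unaffected by the substitution
    set i' := if k < i then i - 1 else i with hi'
    have hv : ∀ A : Lam, subst (var i) k A = var i' := by
      intro A
      simp only [subst, if_neg hik, hi']
      split_ifs <;> rfl
    have shape : ∀ A : Lam, FVB A 0 → ∀ X : Lam, Red (app G A) X → NoStep X →
        ∃ l', X = lamIter k (spineApp (var i') l') := by
      intro A hA X hX hXn
      have r1 : Red (app G A) (lamIter k (spineApp (var i') (l.map (fun P => subst P k A)))) := by
        have := hredA A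
        rwa [hsubH A hA, hv] at this
      obtain ⟨Q, hQ1, hQ2⟩ := red_confluent r1 hX
      obtain ⟨l', hQe, -⟩ := red_hnf_shape hQ1
      rw [red_of_noStep hXn hQ2] at hQe
      exact ⟨l', hQe⟩
    obtain ⟨l1, hT⟩ := shape (sysA 0) (sysA_fvb 0) T redT T_noStep
    obtain ⟨l2, hF⟩ := shape (sysA 1) (sysA_fvb 1) F (redF 0) F_noStep
    obtain ⟨-, hiT, -⟩ := hnf_eq_T hT.symm
    obtain ⟨-, hiF, -⟩ := hnf_eq_F hF.symm
    omega

end Lam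
namespace Lam

/-! ### Closedness helpers -/

theorem closed_of_fvb {M : Lam} (h : FVB M 0) : Closed M :=
  fun n hn => absurd (h n hn) (by omega)

theorem closed_T : FVB T 0 := by
  intro k hk
  simp only [T, HasFree] at hk
  omega

theorem closed_F : FVB F 0 := by
  intro k hk
  simp only [F, HasFree] at hk
  omega

theorem closed_I : FVB I 0 := by
  intro k hk
  simp only [I, HasFree] at hk
  omega

theorem fvb_lift {M : Lam} : ∀ {d : ℕ} (c : ℕ), FVB M d → FVB (lift c M) (d + 1) := by
  induction M with
  | var m =>
    intro d c h k hk
    have := h m rfl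
    simp only [lift] at hk
    split_ifs at hk <;> simp only [HasFree] at hk <;> omega
  | app A B ihA ihB =>
    intro d c h k hk
    obtain ⟨h1, h2⟩ := fvb_app h
    cases hk with
    | inl hk => exact ihA c h1 k hk
    | inr hk => exact ihB c h2 k hk
  | lam A ih =>
    intro d c h k hk
    have := ih (c + 1) (fvb_lam h) (k + 1) hk
    omega

theorem fvb_app_intro {M N : Lam} {d : ℕ} (h1 : FVB M d) (h2 : FVB N d) :
    FVB (app M N) d := by
  intro k hk
  cases hk with
  | inl hk => exact h1 k hk
  | inr hk => exact h2 k hk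

theorem fvb_lam_intro {M : Lam} {d : ℕ} (h : FVB M (d + 1)) : FVB (lam M) d := by
  intro k hk
  have := h (k + 1) hk
  omega

theorem fvb_var {d : ℕ} (m : ℕ) (h : m < d) : FVB (var m) d := by
  intro k hk
  simp only [HasFree] at hk
  omega

theorem fvb_pair {M N : Lam} {d : ℕ} (h1 : FVB M d) (h2 : FVB N d) : FVB (pair M N) d := by
  apply fvb_lam_intro
  exact fvb_app_intro (fvb_app_intro (fvb_var 0 (by omega)) (fvb_lift 0 h1)) (fvb_lift 0 h2)

/-! ### Pair computations -/

theorem subst_pair (M N : Lam) (n : ℕ) (A : Lam) :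
    subst (pair M N) n A = pair (subst M n A) (subst N n A) := by
  simp only [pair, subst]
  rw [if_neg (by omega : ¬ (0 : ℕ) = n + 1), if_neg (by omega : ¬ n + 1 < 0),
    ← lift_subst M 0 n A (by omega), ← lift_subst N 0 n A (by omega)]

/-- `⟨M,N⟩ T ↠ M` -/
theorem red_pair_fst (M N : Lam) : Red (app (pair M N) T) M := by
  have s1 : Step (app (pair M N) T) (app (app T M) N) := by
    have := Step.beta (app (app (var 0) (lift 0 M)) (lift 0 N)) T
    simp only [subst, if_pos rfl, ↓reduceIte, subst_lift_cancel] at this; exact this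
  have s2 : Step (app T M) (lam (lift 0 M)) := by
    have := Step.beta (lam (var 1)) M
    simp only [subst, if_pos rfl, ↓reduceIte, if_neg (by omega : ¬ (1:ℕ) = 0 + 1 + 1),
      if_neg (by omega : ¬ 0 + 1 + 1 < 1)] at this; exact this
  have s3 : Step (app (lam (lift 0 M)) N) M := by
    have := Step.beta (lift 0 M) N
    rwa [subst_lift_cancel] at this
  exact ((Red.of_step s1).trans (Red.appL N (Red.of_step s2))).trans (Red.of_step s3)

theorem red_sysB_zero : Red (app (sysB 0) T) T := red_pair_fst T I

theorem red_sysB_succ (n : ℕ) : Red (app (sysB (n + 1)) T) F := red_pair_fst F (sysA n)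

end Lam
namespace Lam

/-! ### The three reductions to the key lemma -/

theorem no_successor (S : Lam) (hS : Closed S)
    (hspec : ∀ n, BetaEq (app S (sysB' n)) (sysB' (n + 1))) : False := by
  set G := lam (app (app S (pair F (var 0))) T) with hG
  have hGclosed : Closed G := by
    apply closed_of_fvb
    apply fvb_lam_intro
    exact fvb_app_intro
      (fvb_app_intro (fvb_mono (closed_fvb hS) (by omega))
        (fvb_pair (fvb_mono closed_F (by omega)) (fvb_var 0 (by omega))))
      (fvb_mono closed_T (by omega))
  have hstep : ∀ n : ℕ, Step (app G (sysA n)) (app (app S (sysB (n + 1))) T) := by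
    intro n
    have e : subst (app (app S (pair F (var 0))) T) 0 (sysA n)
        = app (app S (sysB (n + 1))) T := by
      simp only [subst, subst_pair, subst_closed hS, subst_of_fvb closed_F (by omega : 0 ≤ 0),
        subst_of_fvb closed_T (by omega : 0 ≤ 0), if_pos rfl]
      rfl
    have := Step.beta (app (app S (pair F (var 0))) T) (sysA n)
    rwa [e] at this
  apply key G hGclosed
  · -- n = 0
    refine (BetaEq.of_step (hstep 0)).trans ?_
    refine (BetaEq.appL T (hspec 0)).trans ?_
    exact red_sysB_zero.betaEq
  · intro n
    refine (BetaEq.of_step (hstep (n + 1))).trans ?_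
    refine (BetaEq.appL T (hspec (n + 2))).trans ?_
    exact (red_sysB_succ (n + 2)).betaEq

theorem no_predecessor (P : Lam) (hP : Closed P)
    (hspec : ∀ n, BetaEq (app P (sysB' (n + 1))) (sysB' n)) : False := by
  set G := lam (app (app P (pair F (lam (var 1)))) T) with hG
  have hGclosed : Closed G := by
    apply closed_of_fvb
    apply fvb_lam_intro
    exact fvb_app_intro
      (fvb_app_intro (fvb_mono (closed_fvb hP) (by omega))
        (fvb_pair (fvb_mono closed_F (by omega)) (fvb_lam_intro (fvb_var 1 (by omega)))))
      (fvb_mono closed_T (by omega))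
  have hstep : ∀ n : ℕ, Step (app G (sysA n)) (app (app P (sysB (n + 2))) T) := by
    intro n
    have e : subst (app (app P (pair F (lam (var 1)))) T) 0 (sysA n)
        = app (app P (sysB (n + 2))) T := by
      have e1 : subst (lam (var 1)) 0 (sysA n) = lam (sysA n) := by
        show lam (subst (var 1) (0 + 1) (lift 0 (sysA n))) = lam (sysA n)
        rw [lift_sysA]
        simp [subst]
      show app (app (subst P 0 (sysA n)) (subst (pair F (lam (var 1))) 0 (sysA n)))
          (subst T 0 (sysA n)) = _
      rw [subst_closed hP, subst_of_fvb closed_T (le_refl 0), subst_pair,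
        subst_of_fvb closed_F (le_refl 0), e1]
      rfl
    have := Step.beta (app (app P (pair F (lam (var 1)))) T) (sysA n)
    rwa [e] at this
  apply key G hGclosed
  · refine (BetaEq.of_step (hstep 0)).trans ?_
    refine (BetaEq.appL T (hspec 1)).trans ?_
    exact red_sysB_zero.betaEq
  · intro n
    refine (BetaEq.of_step (hstep (n + 1))).trans ?_
    refine (BetaEq.appL T (hspec (n + 2))).trans ?_
    exact (red_sysB_succ (n + 1)).betaEq

theorem no_zerotest (Z : Lam) (hZ : Closed Z)
    (hzero : BetaEq (app Z (sysB' 0)) T)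
    (hsucc : ∀ n, BetaEq (app Z (sysB' (n + 1))) F) : False := by
  set G := lam (app Z (pair F (var 0))) with hG
  have hGclosed : Closed G := by
    apply closed_of_fvb
    apply fvb_lam_intro
    exact fvb_app_intro (fvb_mono (closed_fvb hZ) (by omega))
      (fvb_pair (fvb_mono closed_F (by omega)) (fvb_var 0 (by omega)))
  have hstep : ∀ n : ℕ, Step (app G (sysA n)) (app Z (sysB (n + 1))) := by
    intro n
    have e : subst (app Z (pair F (var 0))) 0 (sysA n) = app Z (sysB (n + 1)) := by
      simp only [subst, subst_pair, subst_closed hZ,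
        subst_of_fvb closed_F (by omega : 0 ≤ 0), if_pos rfl]
      rfl
    have := Step.beta (app Z (pair F (var 0))) (sysA n)
    rwa [e] at this
  apply key G hGclosed
  · exact (BetaEq.of_step (hstep 0)).trans hzero
  · intro n
    exact (BetaEq.of_step (hstep (n + 1))).trans (hsucc (n + 1))

end Lam

/-- The numeral system `b′` (`b′₀ = b₁`, `b′₁ = b₀`, `b′ₙ = bₙ` for `n ≥ 2`) possesses
no closed λ-term for Successor, none for Predecessor and none for Zero Test. -/
theorem statement6 :
    (¬ ∃ S, Lam.Closed S ∧ ∀ n, Lam.BetaEq (Lam.app S (Lam.sysB' n)) (Lam.sysB' (n + 1))) ∧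
    (¬ ∃ P, Lam.Closed P ∧ ∀ n, Lam.BetaEq (Lam.app P (Lam.sysB' (n + 1))) (Lam.sysB' n)) ∧
    (¬ ∃ Z, Lam.Closed Z ∧ Lam.BetaEq (Lam.app Z (Lam.sysB' 0)) Lam.T ∧
        ∀ n, Lam.BetaEq (Lam.app Z (Lam.sysB' (n + 1))) Lam.F) := by
  refine ⟨?_, ?_, ?_⟩
  · rintro ⟨S, hS, hspec⟩
    exact Lam.no_successor S hS hspec
  · rintro ⟨P, hP, hspec⟩
    exact Lam.no_predecessor P hP hspec
  · rintro ⟨Z, hZ, hzero, hsucc⟩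
    exact Lam.no_zerotest Z hZ hzero hsucc
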